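/- Let f : ℝ^d → ℝ be twice continuously differentiable with L1-Lipschitz gradient and L2-Lipschitz Hessian. Let x ∈ ℝ^d and let v be a unit vector with vᵀ∇²f(x)v ≤ 0. Define the NCG update: if 2·|vᵀ∇²f(x)v|³/(3·L2²) > ‖∇f(x)‖²/(2·L1), set x⁺ = x − (2·|vᵀ∇²f(x)v|/L2)·sign(vᵀ∇f(x))·v; otherwise set x⁺ = x − (1/L1)·∇f(x). Then f(x) − f(x⁺) ≥ max( 2·|vᵀ∇²f(x)v|³/(3·L2²), ‖∇f(x)‖²/(2·L1) ). -/

import Mathlib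

open scoped RealInnerProductSpace

noncomputable def sgn (t : ℝ) : ℝ := if 0 ≤ t then 1 else -1

lemma sgn_mul_self (t : ℝ) : sgn t * t = |t| := by
  unfold sgn; split_ifs with h
  · rw [one_mul, abs_of_nonneg h]
  · rw [abs_of_neg (lt_of_not_ge h)]; ring

lemma sgn_sq (t : ℝ) : sgn t * sgn t = 1 := by
  unfold sgn; split_ifs <;> norm_num

lemma abs_sgn (t : ℝ) : |sgn t| = 1 := by
  unfold sgn; split_ifs <;> norm_num

lemma mono_aux {ψ : ℝ → ℝ} (hψ : Differentiable ℝ ψ)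
    (hd : ∀ t ∈ Set.Icc (0:ℝ) 1, 0 ≤ deriv ψ t) {a b : ℝ}
    (ha : a ∈ Set.Icc (0:ℝ) 1) (hb : b ∈ Set.Icc (0:ℝ) 1) (hab : a ≤ b) : ψ a ≤ ψ b :=
  monotoneOn_of_deriv_nonneg (convex_Icc 0 1) hψ.continuous.continuousOn
    (fun t ht => (hψ t).differentiableWithinAt)
    (fun t ht => hd t (interior_subset ht)) ha hb hab

lemma quad_bound {φ : ℝ → ℝ} {c : ℝ} (hφ : Differentiable ℝ φ) (h0 : φ 0 = 0)
    (hd : ∀ t ∈ Set.Icc (0:ℝ) 1, deriv φ t ≤ c * t) :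
    ∀ t ∈ Set.Icc (0:ℝ) 1, φ t ≤ c / 2 * t ^ 2 := by
  intro t ht
  set ψ : ℝ → ℝ := fun t => c / 2 * t ^ 2 - φ t with hψdef
  have hψ : Differentiable ℝ ψ := (differentiable_const _|>.mul (differentiable_pow 2)).sub hφ
  have hder : ∀ s, deriv ψ s = c * s - deriv φ s := by
    intro s
    have h1 : HasDerivAt (fun t : ℝ => c / 2 * t ^ 2) (c / 2 * (2 * s ^ 1)) s :=
      (hasDerivAt_pow 2 s).const_mul (c / 2)
    have h2 : HasDerivAt ψ (c / 2 * (2 * s ^ 1) - deriv φ s) s := h1.sub (hφ s).hasDerivAt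
    rw [h2.deriv]; ring
  have := mono_aux hψ (fun s hs => by rw [hder]; linarith [hd s hs])
    (Set.mem_Icc.mpr ⟨le_refl 0, zero_le_one⟩) ht ht.1
  simp only [hψdef, h0] at this
  nlinarith [this]

lemma cube_bound {φ : ℝ → ℝ} {c : ℝ} (hφ : Differentiable ℝ φ) (h0 : φ 0 = 0)
    (hd : ∀ t ∈ Set.Icc (0:ℝ) 1, deriv φ t ≤ c / 2 * t ^ 2) :
    φ 1 ≤ c / 6 := by
  set ψ : ℝ → ℝ := fun t => c / 6 * t ^ 3 - φ t with hψdef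
  have hψ : Differentiable ℝ ψ := (differentiable_const _|>.mul (differentiable_pow 3)).sub hφ
  have hder : ∀ s, deriv ψ s = c / 2 * s ^ 2 - deriv φ s := by
    intro s
    have h1 : HasDerivAt (fun t : ℝ => c / 6 * t ^ 3) (c / 6 * (3 * s ^ 2)) s :=
      (hasDerivAt_pow 3 s).const_mul (c / 6)
    have h2 : HasDerivAt ψ (c / 6 * (3 * s ^ 2) - deriv φ s) s := h1.sub (hφ s).hasDerivAt
    rw [h2.deriv]; ring
  have := mono_aux hψ (fun s hs => by rw [hder]; linarith [hd s hs])
    (Set.mem_Icc.mpr ⟨le_refl 0, zero_le_one⟩) (Set.mem_Icc.mpr ⟨zero_le_one, le_refl 1⟩) zero_le_one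
  simp only [hψdef, h0] at this
  nlinarith [this]
open scoped RealInnerProductSpace

variable {E : Type*} [NormedAddCommGroup E] [InnerProductSpace ℝ E] [CompleteSpace E]

lemma grad_inner (f : E → ℝ) (y u : E) : ⟪gradient f y, u⟫ = fderiv ℝ f y u :=
  InnerProductSpace.toDual_symm_apply

lemma grad_diff {f : E → ℝ} (hf : ContDiff ℝ 2 f) :
    Differentiable ℝ (gradient f) := by
  have h1 : Differentiable ℝ (fderiv ℝ f) :=
    (hf.fderiv_right (by norm_num : (1:WithTop ℕ∞) + 1 ≤ 2)).differentiable (by norm_num)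
  have : gradient f = fun y => (InnerProductSpace.toDual ℝ E).symm (fderiv ℝ f y) := rfl
  rw [this]
  exact ((InnerProductSpace.toDual ℝ E).symm.toContinuousLinearEquiv
    |>.toContinuousLinearMap.differentiable).comp h1

lemma line_deriv (x u : E) (t : ℝ) : HasDerivAt (fun t : ℝ => x + t • u) u t := by
  simpa using ((hasDerivAt_id t).smul_const u).const_add x

lemma taylor1 {f : E → ℝ} {L1 : ℝ} (hf : ContDiff ℝ 2 f)
    (hglip : ∀ a b : E, ‖gradient f a - gradient f b‖ ≤ L1 * ‖a - b‖)
    (x u : E) : f (x + u) ≤ f x + ⟪gradient f x, u⟫ + L1 / 2 * ‖u‖ ^ 2 := by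
  have hfd : Differentiable ℝ f := hf.differentiable (by norm_num)
  set p : ℝ → E := fun t => x + t • u with hp
  have hg' : ∀ t : ℝ, HasDerivAt (fun s => f (p s)) ⟪gradient f (p t), u⟫ t := by
    intro t
    have := (hfd (p t)).hasFDerivAt.comp_hasDerivAt t (line_deriv x u t)
    rwa [grad_inner]
  set φ : ℝ → ℝ := fun t => f (p t) - f x - t * ⟪gradient f x, u⟫ with hφdef
  have hφ' : ∀ t : ℝ, HasDerivAt φ (⟪gradient f (p t), u⟫ - ⟪gradient f x, u⟫) t := by
    intro t
    have h2 : HasDerivAt (fun s : ℝ => s * ⟪gradient f x, u⟫) ⟪gradient f x, u⟫ t := by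
      simpa using (hasDerivAt_id t).mul_const ⟪gradient f x, u⟫
    exact ((hg' t).sub_const (f x)).sub h2
  have hφdiff : Differentiable ℝ φ := fun t => (hφ' t).differentiableAt
  have h0 : φ 0 = 0 := by simp [hφdef, hp]
  have key := quad_bound (c := L1 * ‖u‖ ^ 2) hφdiff h0 ?_ 1 (by norm_num)
  · have hp1 : p 1 = x + u := by simp [hp]
    simp only [hφdef, hp1] at key
    nlinarith [key]
  · intro t ht
    rw [(hφ' t).deriv]
    have : ⟪gradient f (p t), u⟫ - ⟪gradient f x, u⟫ = ⟪gradient f (p t) - gradient f x, u⟫ := by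
      rw [inner_sub_left]
    rw [this]
    calc ⟪gradient f (p t) - gradient f x, u⟫ ≤ ‖gradient f (p t) - gradient f x‖ * ‖u‖ :=
          real_inner_le_norm _ _
      _ ≤ (L1 * ‖p t - x‖) * ‖u‖ := by
          have := hglip (p t) x
          nlinarith [norm_nonneg u, norm_nonneg (gradient f (p t) - gradient f x)]
      _ ≤ L1 * ‖u‖ ^ 2 * t := by
          have hpt : p t - x = t • u := by simp [hp]
          rw [hpt, norm_smul, Real.norm_eq_abs, abs_of_nonneg ht.1]
          nlinarith [ht.1, norm_nonneg u]

lemma taylor2 {f : E → ℝ} {L2 : ℝ} (hf : ContDiff ℝ 2 f)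
    (hHlip : ∀ a b : E, ‖fderiv ℝ (gradient f) a - fderiv ℝ (gradient f) b‖ ≤ L2 * ‖a - b‖)
    (x u : E) : f (x + u) ≤ f x + ⟪gradient f x, u⟫
      + 1 / 2 * ⟪(fderiv ℝ (gradient f) x) u, u⟫ + L2 / 6 * ‖u‖ ^ 3 := by
  have hfd : Differentiable ℝ f := hf.differentiable (by norm_num)
  have hGd : Differentiable ℝ (gradient f) := grad_diff hf
  set p : ℝ → E := fun t => x + t • u with hp
  set q : ℝ := ⟪(fderiv ℝ (gradient f) x) u, u⟫ with hq
  have hg' : ∀ t : ℝ, HasDerivAt (fun s => f (p s)) ⟪gradient f (p t), u⟫ t := by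
    intro t
    have := (hfd (p t)).hasFDerivAt.comp_hasDerivAt t (line_deriv x u t)
    rwa [grad_inner]
  have hg'' : ∀ t : ℝ, HasDerivAt (fun s => ⟪gradient f (p s), u⟫)
      ⟪(fderiv ℝ (gradient f) (p t)) u, u⟫ t := by
    intro t
    have h2 : HasDerivAt (fun s => gradient f (p s)) ((fderiv ℝ (gradient f) (p t)) u) t :=
      (hGd (p t)).hasFDerivAt.comp_hasDerivAt t (line_deriv x u t)
    simpa [real_inner_comm] using HasDerivAt.inner ℝ h2 (hasDerivAt_const t u)
  -- inner function χ
  set χ : ℝ → ℝ := fun t => ⟪gradient f (p t), u⟫ - ⟪gradient f x, u⟫ - t * q with hχdef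
  have hχ' : ∀ t : ℝ, HasDerivAt χ (⟪(fderiv ℝ (gradient f) (p t)) u, u⟫ - q) t := by
    intro t
    have h2 : HasDerivAt (fun s : ℝ => ⟪gradient f x, u⟫ + s * q) q t := by
      simpa using ((hasDerivAt_id t).mul_const q).const_add ⟪gradient f x, u⟫
    have := (hg'' t).sub h2
    refine this.congr_of_eventuallyEq (Filter.Eventually.of_forall fun s => ?_)
    simp only [hχdef, Pi.sub_apply]; ring
  have hχdiff : Differentiable ℝ χ := fun t => (hχ' t).differentiableAt
  have hχ0 : χ 0 = 0 := by simp [hχdef, hp]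
  have hχbound : ∀ t ∈ Set.Icc (0:ℝ) 1, χ t ≤ (L2 * ‖u‖ ^ 3) / 2 * t ^ 2 := by
    refine quad_bound hχdiff hχ0 ?_
    intro t ht
    rw [(hχ' t).deriv]
    have heq : ⟪(fderiv ℝ (gradient f) (p t)) u, u⟫ - q
        = ⟪((fderiv ℝ (gradient f) (p t)) - fderiv ℝ (gradient f) x) u, u⟫ := by
      rw [ContinuousLinearMap.sub_apply, inner_sub_left]
    rw [heq]
    calc ⟪((fderiv ℝ (gradient f) (p t)) - fderiv ℝ (gradient f) x) u, u⟫
        ≤ ‖((fderiv ℝ (gradient f) (p t)) - fderiv ℝ (gradient f) x) u‖ * ‖u‖ :=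
          real_inner_le_norm _ _
      _ ≤ (‖(fderiv ℝ (gradient f) (p t)) - fderiv ℝ (gradient f) x‖ * ‖u‖) * ‖u‖ := by
          have h := ContinuousLinearMap.le_opNorm
            ((fderiv ℝ (gradient f) (p t)) - fderiv ℝ (gradient f) x) u
          gcongr
      _ ≤ ((L2 * ‖p t - x‖) * ‖u‖) * ‖u‖ := by
          have h := hHlip (p t) x
          gcongr
      _ ≤ L2 * ‖u‖ ^ 3 * t := by
          have hpt : p t - x = t • u := by simp [hp]
          rw [hpt, norm_smul, Real.norm_eq_abs, abs_of_nonneg ht.1]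
          nlinarith [ht.1, norm_nonneg u]
  set φ : ℝ → ℝ := fun t => f (p t) - f x - t * ⟪gradient f x, u⟫ - t ^ 2 / 2 * q with hφdef
  have hφ' : ∀ t : ℝ, HasDerivAt φ (χ t) t := by
    intro t
    have h2 : HasDerivAt (fun s : ℝ => s * ⟪gradient f x, u⟫) ⟪gradient f x, u⟫ t := by
      simpa using (hasDerivAt_id t).mul_const ⟪gradient f x, u⟫
    have h3 : HasDerivAt (fun s : ℝ => s ^ 2 / 2 * q) (t * q) t := by
      have h := (hasDerivAt_pow 2 t).mul_const (q / 2)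
      have heq : (fun s : ℝ => s ^ 2 / 2 * q) = fun s : ℝ => s ^ 2 * (q / 2) := by
        funext s; ring
      rw [heq]
      refine h.congr_deriv ?_
      push_cast
      ring
    have h4 := (((hg' t).sub_const (f x)).sub h2).sub h3
    have heq2 : χ t = ⟪gradient f (p t), u⟫ - ⟪gradient f x, u⟫ - t * q := rfl
    rw [heq2]
    exact h4
  have hφdiff : Differentiable ℝ φ := fun t => (hφ' t).differentiableAt
  have h0 : φ 0 = 0 := by simp [hφdef, hp]
  have key := cube_bound (c := L2 * ‖u‖ ^ 3) hφdiff h0 ?_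
  · have hp1 : p 1 = x + u := by simp [hp]
    simp only [hφdef, hp1] at key
    nlinarith [key]
  · intro t ht
    rw [(hφ' t).deriv]
    exact (hχbound t ht).trans_eq (by ring)

set_option maxHeartbeats 800000 in
/-- Lemma on the NCG step: the NCG update decreases the objective by at least
the maximum of the negative-curvature decrease and the gradient-descent decrease. -/
theorem NCG_step_decrease {d : ℕ}
    (f : EuclideanSpace ℝ (Fin d) → ℝ) (L1 L2 : ℝ) (hL1 : 0 < L1) (hL2 : 0 < L2)
    (hf : ContDiff ℝ 2 f)
    (hglip : ∀ a b : EuclideanSpace ℝ (Fin d),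
      ‖gradient f a - gradient f b‖ ≤ L1 * ‖a - b‖)
    (hHlip : ∀ a b : EuclideanSpace ℝ (Fin d),
      ‖fderiv ℝ (gradient f) a - fderiv ℝ (gradient f) b‖ ≤ L2 * ‖a - b‖)
    (x v : EuclideanSpace ℝ (Fin d)) (hv : ‖v‖ = 1)
    (hneg : ⟪(fderiv ℝ (gradient f) x) v, v⟫ ≤ 0)
    (xp : EuclideanSpace ℝ (Fin d))
    (hxp : xp =
      if 2 * |⟪(fderiv ℝ (gradient f) x) v, v⟫| ^ 3 / (3 * L2 ^ 2) >
          ‖gradient f x‖ ^ 2 / (2 * L1) then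
        x - ((2 * |⟪(fderiv ℝ (gradient f) x) v, v⟫| / L2) * sgn ⟪gradient f x, v⟫) • v
      else
        x - (1 / L1) • gradient f x) :
    f x - f xp ≥
      max (2 * |⟪(fderiv ℝ (gradient f) x) v, v⟫| ^ 3 / (3 * L2 ^ 2))
        (‖gradient f x‖ ^ 2 / (2 * L1)) := by
  set q : ℝ := ⟪(fderiv ℝ (gradient f) x) v, v⟫ with hqdef
  set g : EuclideanSpace ℝ (Fin d) := gradient f x with hgdef
  by_cases h : 2 * |q| ^ 3 / (3 * L2 ^ 2) > ‖g‖ ^ 2 / (2 * L1)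
  · -- negative curvature step
    rw [if_pos h] at hxp
    rw [max_eq_left (le_of_lt h)]
    set s : ℝ := (2 * |q| / L2) * sgn ⟪g, v⟫ with hsdef
    have hxp' : xp = x + (-s) • v := by rw [hxp, neg_smul, ← sub_eq_add_neg]
    have key := taylor2 hf hHlip x ((-s) • v)
    rw [← hxp'] at key
    have h1 : ⟪g, (-s) • v⟫ = (-s) * ⟪g, v⟫ := real_inner_smul_right _ _ _
    have h2 : ⟪(fderiv ℝ (gradient f) x) ((-s) • v), (-s) • v⟫ = s * s * q := by
      rw [map_smul, real_inner_smul_left, real_inner_smul_right, ← hqdef]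
      ring
    have h3 : ‖(-s) • v‖ = 2 * |q| / L2 := by
      rw [norm_smul, hv, mul_one, Real.norm_eq_abs, abs_neg, hsdef, abs_mul, abs_sgn,
        mul_one, abs_of_nonneg (by positivity : (0:ℝ) ≤ 2 * |q| / L2)]
    have hs2 : s * s = (2 * |q| / L2) ^ 2 := by
      rw [hsdef]; linear_combination (2 * |q| / L2) ^ 2 * sgn_sq ⟪g, v⟫
    have hgv : (-s) * ⟪g, v⟫ = -(2 * |q| / L2) * |⟪g, v⟫| := by
      rw [hsdef]; linear_combination (-(2 * |q| / L2)) * sgn_mul_self ⟪g, v⟫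
    have hqn : q = -|q| := by rw [abs_of_nonpos hneg]; ring
    rw [h1, h2, h3, hs2, hgv] at key
    have habs : 0 ≤ |⟪g, v⟫| := abs_nonneg _
    have hA : 0 ≤ |q| := abs_nonneg q
    have e1 : 1 / 2 * ((2 * |q| / L2) ^ 2 * q) = -(2 * |q| ^ 3 / L2 ^ 2) := by
      linear_combination ((2 * |q| / L2) ^ 2 / 2) * hqn
    have e2 : L2 / 6 * (2 * |q| / L2) ^ 3 = 4 * |q| ^ 3 / (3 * L2 ^ 2) := by
      field_simp; ring
    rw [e1, e2] at key
    have hterm : -(2 * |q| / L2) * |⟪g, v⟫| ≤ 0 := by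
      have : 0 ≤ 2 * |q| / L2 := by positivity
      nlinarith
    have goal : 2 * |q| ^ 3 / (3 * L2 ^ 2) = 2 * |q| ^ 3 / L2 ^ 2 - 4 * |q| ^ 3 / (3 * L2 ^ 2) := by
      field_simp; ring
    linarith [key]
  · -- gradient step
    rw [if_neg h] at hxp
    rw [max_eq_right (not_lt.mp h)]
    have hxp' : xp = x + (-(1 / L1)) • g := by rw [hxp, neg_smul, ← sub_eq_add_neg]
    have key := taylor1 hf hglip x ((-(1 / L1)) • g)
    rw [← hxp'] at key
    have h1 : ⟪g, (-(1 / L1)) • g⟫ = -(1 / L1) * ‖g‖ ^ 2 := by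
      rw [real_inner_smul_right, real_inner_self_eq_norm_sq]
    have h2 : ‖(-(1 / L1)) • g‖ ^ 2 = (1 / L1) ^ 2 * ‖g‖ ^ 2 := by
      rw [norm_smul, Real.norm_eq_abs, abs_neg, abs_of_nonneg (by positivity : (0:ℝ) ≤ 1 / L1)]
      ring
    rw [h1, h2] at key
    have e1 : -(1 / L1) * ‖g‖ ^ 2 + L1 / 2 * ((1 / L1) ^ 2 * ‖g‖ ^ 2)
        = -(‖g‖ ^ 2 / (2 * L1)) := by
      field_simp; ring
    linarith [key, e1.symm.le]
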